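/- Let p ∈ (1/2,1), let (Ŝ_n) be a one-dimensional step-reinforced random walk with centered typical step X ∈ L²(P), and let a_n = Γ(n+p)/(Γ(n)Γ(p+1)). Then M_n := Ŝ_n/a_n is a mean-zero martingale with respect to F_n = σ(X̂_1,…,X̂_n). -/

import Mathlib

open MeasureTheory ProbabilityTheory Filter

/-- Index space for the three independent sources of randomness of a step-reinforced
random walk: the i.i.d. steps (values in `α`), the Bernoulli coins, the uniform picks. -/
def srwSpace (α : Type) : ℕ ⊕ ℕ ⊕ ℕ → Type
  | .inl _ => α
  | .inr (.inl _) => Bool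
  | .inr (.inr _) => ℕ

instance srwSpaceMS (α : Type) [MeasurableSpace α] : ∀ i, MeasurableSpace (srwSpace α i)
  | .inl _ => inferInstanceAs (MeasurableSpace α)
  | .inr (.inl _) => inferInstanceAs (MeasurableSpace Bool)
  | .inr (.inr _) => inferInstanceAs (MeasurableSpace ℕ)

/-- The combined family of random variables `X, ε, U`. -/
def srwFun {Ω : Type*} {α : Type} (X : ℕ → Ω → α) (ε : ℕ → Ω → Bool) (U : ℕ → Ω → ℕ) :
    ∀ i : ℕ ⊕ ℕ ⊕ ℕ, Ω → srwSpace α i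
  | .inl n => X n
  | .inr (.inl n) => ε n
  | .inr (.inr n) => U n

private lemma indep_mono' {Ω : Type*} {m0 : MeasurableSpace Ω} {μ : Measure Ω}
    {m1 m2 m1' m2' : MeasurableSpace Ω} (h : Indep m1 m2 μ) (h1 : m1' ≤ m1) (h2 : m2' ≤ m2) :
    Indep m1' m2' μ := by
  rw [Indep_iff] at h ⊢
  exact fun t1 t2 ht1 ht2 => h t1 t2 (h1 _ ht1) (h2 _ ht2)

private lemma indepFun_of_measurable' {Ω β γ : Type*} {m0 : MeasurableSpace Ω} {μ : Measure Ω}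
    [MeasurableSpace β] [MeasurableSpace γ]
    {mA mB : MeasurableSpace Ω} {f : Ω → β} {g : Ω → γ}
    (h : Indep mA mB μ) (hf : Measurable[mA] f) (hg : Measurable[mB] g) : IndepFun f g μ := by
  rw [IndepFun_iff_Indep]
  exact indep_mono' h (measurable_iff_comap_le.1 hf) (measurable_iff_comap_le.1 hg)

theorem stmt6 {Ω : Type*} [m0 : MeasurableSpace Ω] (P : Measure Ω) [IsProbabilityMeasure P]
    (p : ℝ) (hp : p ∈ Set.Ioo (1/2 : ℝ) 1)
    (X : ℕ → Ω → ℝ) (ε : ℕ → Ω → Bool) (U : ℕ → Ω → ℕ) (Xhat : ℕ → Ω → ℝ)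
    (hmX : ∀ i, Measurable (X i)) (hmε : ∀ i, Measurable (ε i)) (hmU : ∀ i, Measurable (U i))
    (hmXhat : ∀ i, Measurable (Xhat i))
    -- the `X i` are i.i.d., the whole randomness is jointly independent
    (hid : ∀ i, P.map (X i) = P.map (X 1))
    (hindep : iIndepFun (m := fun i => srwSpaceMS ℝ i) (srwFun X ε U) P)
    -- `ε i` is Bernoulli(p) and `U i` is uniform on `{1, …, i-1}`
    (hε : ∀ i, 2 ≤ i → P {ω | ε i ω = true} = ENNReal.ofReal p)
    (hUmem : ∀ i, 2 ≤ i → ∀ ω, U i ω ∈ Finset.Icc 1 (i - 1))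
    (hUunif : ∀ i, 2 ≤ i → ∀ j ∈ Finset.Icc 1 (i - 1),
      P {ω | U i ω = j} = ((i - 1 : ℕ) : ENNReal)⁻¹)
    -- the reinforcement recursion
    (hX1 : Xhat 1 = X 1)
    (hrec : ∀ i, 2 ≤ i → ∀ ω, Xhat i ω = if ε i ω then Xhat (U i ω) ω else X i ω)
    -- the typical step is centered and square-integrable
    (hL2 : MemLp (X 1) 2 P) (hcent : ∫ ω, X 1 ω ∂P = 0)
    -- the walk
    (S : ℕ → Ω → ℝ) (hS : ∀ n ω, S n ω = ∑ i ∈ Finset.Icc 1 n, Xhat i ω)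
    -- the natural filtration
    (F : ℕ → MeasurableSpace Ω)
    (hF : ∀ n, F n = ⨆ i ∈ Finset.Icc 1 n, MeasurableSpace.comap (Xhat i) inferInstance)
    -- the normalizing sequence
    (a : ℕ → ℝ) (ha : ∀ n : ℕ, a n = Real.Gamma (n + p) / (Real.Gamma n * Real.Gamma (p + 1)))
    -- the martingale
    (M : ℕ → Ω → ℝ) (hM : ∀ n ω, M n ω = S n ω / a n)
 :
    (∀ n : ℕ, 1 ≤ n → Measurable[F n] (M n)) ∧
    (∀ n : ℕ, 1 ≤ n → ∫ ω, M n ω ∂P = 0) ∧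
    (∀ n : ℕ, 1 ≤ n → P[M (n + 1)|F n] =ᵐ[P] M n) := by
  obtain ⟨hp0, hp1⟩ := hp
  have hp0' : 0 < p := lt_trans (by norm_num) hp0
  -- measurability of the whole family
  have hmf : ∀ i, Measurable (srwFun X ε U i) := by
    rintro (n | n | n)
    · exact hmX n
    · exact hmε n
    · exact hmU n
  have hcle : ∀ i, (srwSpaceMS ℝ i).comap (srwFun X ε U i) ≤ m0 := fun i => (hmf i).comap_le
  have hiI : iIndep (fun i => (srwSpaceMS ℝ i).comap (srwFun X ε U i)) P :=
    (iIndepFun_iff_iIndep _ _ _).mp hindep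
  -- the index function
  set idx : ℕ ⊕ ℕ ⊕ ℕ → ℕ := Sum.elim id (Sum.elim id id) with hidx
  -- the σ-algebra of everything up to time n
  set G : ℕ → MeasurableSpace Ω :=
    fun n => ⨆ i ∈ {x : ℕ ⊕ ℕ ⊕ ℕ | idx x ≤ n}, (srwSpaceMS ℝ i).comap (srwFun X ε U i) with hG
  have hGle : ∀ n, G n ≤ m0 := fun n => iSup₂_le fun i _ => hcle i
  have hcomapG : ∀ i n, idx i ≤ n →
      (srwSpaceMS ℝ i).comap (srwFun X ε U i) ≤ G n := fun i n hi =>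
    le_iSup₂ (f := fun i _ => (srwSpaceMS ℝ i).comap (srwFun X ε U i)) i hi
  have hGmono : Monotone G := by
    intro a b hab
    exact iSup₂_le fun i hi => hcomapG i b (le_trans hi hab)
  have hmXG : ∀ k n, k ≤ n → Measurable[G n] (X k) := fun k n hk =>
    measurable_iff_comap_le.2 (hcomapG (Sum.inl k) n hk)
  have hmεG : ∀ k n, k ≤ n → Measurable[G n] (ε k) := fun k n hk =>
    measurable_iff_comap_le.2 (hcomapG (Sum.inr (Sum.inl k)) n hk)
  have hmUG : ∀ k n, k ≤ n → Measurable[G n] (U k) := fun k n hk =>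
    measurable_iff_comap_le.2 (hcomapG (Sum.inr (Sum.inr k)) n hk)
  -- the collapsed recursion
  have hXhat_eq : ∀ k, 2 ≤ k → ∀ ω, Xhat k ω =
      if ε k ω = true then (∑ j ∈ Finset.Icc 1 (k-1), if U k ω = j then Xhat j ω else 0)
      else X k ω := by
    intro k hk ω
    rw [hrec k hk ω]
    by_cases h : ε k ω = true
    · rw [if_pos h, if_pos h, Finset.sum_ite_eq, if_pos (hUmem k hk ω)]
    · rw [if_neg h, if_neg h]
  -- Xhat k is measurable for the past σ-algebra
  have hXhatG : ∀ k, 1 ≤ k → Measurable[G k] (Xhat k) := by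
    intro k
    induction k using Nat.strong_induction_on with
    | _ k ih =>
      intro hk1
      rcases eq_or_lt_of_le hk1 with h1 | h2
      · rw [← h1, hX1]; exact hmXG 1 1 le_rfl
      · have hk2 : 2 ≤ k := h2
        have : Xhat k = fun ω =>
            if ε k ω = true then (∑ j ∈ Finset.Icc 1 (k-1), if U k ω = j then Xhat j ω else 0)
            else X k ω := funext (hXhat_eq k hk2)
        rw [this]
        refine Measurable.ite ((hmεG k k le_rfl) (measurableSet_singleton true)) ?_
          (hmXG k k le_rfl)
        refine Finset.measurable_sum _ fun j hj => ?_
        rw [Finset.mem_Icc] at hj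
        refine Measurable.ite ((hmUG k k le_rfl) (measurableSet_singleton j)) ?_ measurable_const
        exact (ih j (lt_of_le_of_lt hj.2 (Nat.sub_lt (by omega) one_pos)) hj.1).mono
          (hGmono (le_trans hj.2 (Nat.sub_le k 1))) le_rfl
  have hXhatGn : ∀ k n, 1 ≤ k → k ≤ n → Measurable[G n] (Xhat k) := fun k n h1 h2 =>
    (hXhatG k h1).mono (hGmono h2) le_rfl
  -- the filtration is dominated by G
  have hFleG : ∀ n, F n ≤ G n := by
    intro n
    rw [hF]
    refine iSup₂_le fun i hi => ?_
    rw [Finset.mem_Icc] at hi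
    exact measurable_iff_comap_le.1 (hXhatGn i n hi.1 hi.2)
  have hFle : ∀ n, F n ≤ m0 := fun n => (hFleG n).trans (hGle n)
  -- Part 1 : measurability
  have part1 : ∀ n : ℕ, 1 ≤ n → Measurable[F n] (M n) := by
    intro n hn
    have : M n = fun ω => (∑ i ∈ Finset.Icc 1 n, Xhat i ω) / a n := by
      funext ω; rw [hM, hS]
    rw [this]
    refine Measurable.div_const ?_ _
    refine Finset.measurable_sum _ fun i hi => ?_
    exact measurable_iff_comap_le.2
      (le_iSup₂ (f := fun i (_ : i ∈ Finset.Icc 1 n) =>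
        MeasurableSpace.comap (Xhat i) inferInstance) i hi) |>.mono (le_of_eq (hF n).symm) le_rfl
  -- integrability of the steps
  have hintX : ∀ i, Integrable (X i) P := by
    intro i
    have h1 : Integrable (X 1) P := hL2.integrable one_le_two
    have h2 : Integrable (fun x : ℝ => x) (P.map (X i)) := by
      rw [hid i]
      exact (integrable_map_measure aestronglyMeasurable_id (hmX 1).aemeasurable).mpr h1
    exact (integrable_map_measure aestronglyMeasurable_id (hmX i).aemeasurable).mp h2
  have hEX : ∀ i, ∫ ω, X i ω ∂P = 0 := by
    intro i
    have h1 : ∫ x, (fun y : ℝ => y) x ∂(P.map (X i)) = ∫ ω, X i ω ∂P :=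
      integral_map (hmX i).aemeasurable aestronglyMeasurable_id
    have h2 : ∫ x, (fun y : ℝ => y) x ∂(P.map (X 1)) = ∫ ω, X 1 ω ∂P :=
      integral_map (hmX 1).aemeasurable aestronglyMeasurable_id
    rw [← h1, hid i, h2, hcent]
  -- integrability of the reinforced steps
  have hintXhat : ∀ k, 1 ≤ k → Integrable (Xhat k) P := by
    intro k
    induction k using Nat.strong_induction_on with
    | _ k ih =>
      intro hk1
      rcases eq_or_lt_of_le hk1 with h1 | h2
      · rw [← h1, hX1]; exact hintX 1
      · have hk2 : 2 ≤ k := h2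
        have hgint : Integrable (fun ω => (∑ j ∈ Finset.Icc 1 (k-1), |Xhat j ω|) + |X k ω|) P := by
          refine Integrable.add ?_ (hintX k).abs
          refine integrable_finset_sum _ fun j hj => ?_
          rw [Finset.mem_Icc] at hj
          exact (ih j (lt_of_le_of_lt hj.2 (Nat.sub_lt (by omega) one_pos)) hj.1).abs
        refine Integrable.mono' hgint (hmXhat k).aestronglyMeasurable (ae_of_all _ fun ω => ?_)
        rw [hrec k hk2 ω]
        by_cases h : ε k ω
        · rw [if_pos h]
          refine le_trans ?_ (le_add_of_nonneg_right (abs_nonneg _))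
          calc ‖Xhat (U k ω) ω‖ = |Xhat (U k ω) ω| := rfl
            _ ≤ ∑ j ∈ Finset.Icc 1 (k-1), |Xhat j ω| :=
              Finset.single_le_sum (f := fun j => |Xhat j ω|) (fun j _ => abs_nonneg _) (hUmem k hk2 ω)
        · rw [if_neg h]
          exact le_add_of_nonneg_left (Finset.sum_nonneg fun j _ => abs_nonneg _)
  have hintS : ∀ n, Integrable (S n) P := by
    intro n
    have : S n = fun ω => ∑ i ∈ Finset.Icc 1 n, Xhat i ω := funext fun ω => hS n ω
    rw [this]
    refine integrable_finset_sum _ fun i hi => ?_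
    rw [Finset.mem_Icc] at hi
    exact hintXhat i hi.1
  have hintM : ∀ n, Integrable (M n) P := by
    intro n
    have : M n = fun ω => S n ω / a n := funext fun ω => hM n ω
    rw [this]
    exact (hintS n).div_const _
    -- independence machinery
  have hbig : ∀ Sset Tset : Set (ℕ ⊕ ℕ ⊕ ℕ), Disjoint Sset Tset →
      Indep (⨆ i ∈ Sset, (srwSpaceMS ℝ i).comap (srwFun X ε U i))
            (⨆ i ∈ Tset, (srwSpaceMS ℝ i).comap (srwFun X ε U i)) P :=
    fun Sset Tset h => indep_iSup_of_disjoint hcle hiI h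
  set cE : ℕ → MeasurableSpace Ω := fun k =>
    (srwSpaceMS ℝ (Sum.inr (Sum.inl k))).comap (srwFun X ε U (Sum.inr (Sum.inl k))) with hcE
  set cU : ℕ → MeasurableSpace Ω := fun k =>
    (srwSpaceMS ℝ (Sum.inr (Sum.inr k))).comap (srwFun X ε U (Sum.inr (Sum.inr k))) with hcU
  set cX : ℕ → MeasurableSpace Ω := fun k =>
    (srwSpaceMS ℝ (Sum.inl k)).comap (srwFun X ε U (Sum.inl k)) with hcX
  have hmεc : ∀ k, Measurable[cE k] (ε k) := fun k => measurable_iff_comap_le.2 le_rfl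
  have hmUc : ∀ k, Measurable[cU k] (U k) := fun k => measurable_iff_comap_le.2 le_rfl
  have hmXc : ∀ k, Measurable[cX k] (X k) := fun k => measurable_iff_comap_le.2 le_rfl
  have hInd1 : ∀ n : ℕ, Indep (G n) (cE (n+1) ⊔ cU (n+1)) P := by
    intro n
    have hdisj : Disjoint {x : ℕ ⊕ ℕ ⊕ ℕ | idx x ≤ n}
        ({Sum.inr (Sum.inl (n+1)), Sum.inr (Sum.inr (n+1))} : Set (ℕ ⊕ ℕ ⊕ ℕ)) := by
      rw [Set.disjoint_right]
      intro x hx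
      rcases hx with rfl | rfl <;> · intro hx'; simp [hidx] at hx'
    refine indep_mono' (hbig _ _ hdisj) le_rfl (sup_le ?_ ?_)
    · exact le_iSup₂ (f := fun i (_ : i ∈ ({Sum.inr (Sum.inl (n+1)), Sum.inr (Sum.inr (n+1))} :
        Set (ℕ ⊕ ℕ ⊕ ℕ))) => (srwSpaceMS ℝ i).comap (srwFun X ε U i)) _ (Set.mem_insert _ _)
    · exact le_iSup₂ (f := fun i (_ : i ∈ ({Sum.inr (Sum.inl (n+1)), Sum.inr (Sum.inr (n+1))} :
        Set (ℕ ⊕ ℕ ⊕ ℕ))) => (srwSpaceMS ℝ i).comap (srwFun X ε U i)) _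
        (Set.mem_insert_of_mem _ rfl)
  have hInd2 : ∀ n : ℕ, Indep (G n ⊔ cE (n+1)) (cX (n+1)) P := by
    intro n
    have hdisj : Disjoint ({x : ℕ ⊕ ℕ ⊕ ℕ | idx x ≤ n} ∪ {Sum.inr (Sum.inl (n+1))})
        ({Sum.inl (n+1)} : Set (ℕ ⊕ ℕ ⊕ ℕ)) := by
      rw [Set.disjoint_right]
      intro x hx
      rcases hx with rfl
      intro hx'
      rcases hx' with hx' | hx'
      · simp [hidx] at hx'
      · exact absurd hx' (by simp)
    refine indep_mono' (hbig _ _ hdisj) (sup_le ?_ ?_) ?_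
    · exact iSup₂_le fun i hi => le_iSup₂ (f := fun i (_ : i ∈ ({x : ℕ ⊕ ℕ ⊕ ℕ | idx x ≤ n} ∪
        {Sum.inr (Sum.inl (n+1))})) => (srwSpaceMS ℝ i).comap (srwFun X ε U i)) i
        (Set.mem_union_left _ hi)
    · exact le_iSup₂ (f := fun i (_ : i ∈ ({x : ℕ ⊕ ℕ ⊕ ℕ | idx x ≤ n} ∪
        {Sum.inr (Sum.inl (n+1))})) => (srwSpaceMS ℝ i).comap (srwFun X ε U i)) _
        (Set.mem_union_right _ rfl)
    · exact le_iSup₂ (f := fun i (_ : i ∈ ({Sum.inl (n+1)} : Set (ℕ ⊕ ℕ ⊕ ℕ))) =>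
        (srwSpaceMS ℝ i).comap (srwFun X ε U i)) _ rfl
  have hIndεU : ∀ k : ℕ, Indep (cE k) (cU k) P := by
    intro k
    have hdisj : Disjoint ({Sum.inr (Sum.inl k)} : Set (ℕ ⊕ ℕ ⊕ ℕ)) {Sum.inr (Sum.inr k)} := by
      simp
    refine indep_mono' (hbig _ _ hdisj) ?_ ?_
    · exact le_iSup₂ (f := fun i (_ : i ∈ ({Sum.inr (Sum.inl k)} : Set (ℕ ⊕ ℕ ⊕ ℕ))) =>
        (srwSpaceMS ℝ i).comap (srwFun X ε U i)) _ rfl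
    · exact le_iSup₂ (f := fun i (_ : i ∈ ({Sum.inr (Sum.inr k)} : Set (ℕ ⊕ ℕ ⊕ ℕ))) =>
        (srwSpaceMS ℝ i).comap (srwFun X ε U i)) _ rfl
  -- measurability of the relevant sets
  have hAmeas : ∀ k, MeasurableSet[cE k] {ω | ε k ω = true} :=
    fun k => hmεc k (measurableSet_singleton true)
  have hBmeas : ∀ k j, MeasurableSet[cU k] {ω | U k ω = j} :=
    fun k j => hmUc k (measurableSet_singleton j)
  have hCmeas : ∀ k, MeasurableSet[cE k] {ω | ε k ω = false} :=
    fun k => hmεc k (measurableSet_singleton false)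
  -- probability of the joint coin-pick events
  have hPεU : ∀ n : ℕ, 1 ≤ n → ∀ j,
      P ({ω | ε (n+1) ω = true} ∩ {ω | U (n+1) ω = j}) =
        ENNReal.ofReal p * P {ω | U (n+1) ω = j} := by
    intro n hn j
    have h := hIndεU (n+1)
    rw [Indep_iff] at h
    rw [h _ _ (hAmeas (n+1)) (hBmeas (n+1) j), hε (n+1) (by omega)]
  -- the key integral computation
  have key : ∀ n : ℕ, 1 ≤ n → ∀ g : Ω → ℝ, Measurable[G n] g → (∀ ω, ‖g ω‖ ≤ 1) →
      ∫ ω, g ω * Xhat (n+1) ω ∂P = (p / n) * ∫ ω, g ω * S n ω ∂P := by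
    intro n hn g hgmeas hgbdd
    have hgm0 : Measurable g := hgmeas.mono (hGle n) le_rfl
    have hk2 : 2 ≤ n + 1 := by omega
    have hidx1 : n + 1 - 1 = n := by omega
    set A : Set Ω := {ω | ε (n+1) ω = true} with hA
    set B : ℕ → Set Ω := fun j => {ω | U (n+1) ω = j} with hB
    set C : Set Ω := {ω | ε (n+1) ω = false} with hC
    have hAm0 : MeasurableSet A := hmε (n+1) (measurableSet_singleton true)
    have hBm0 : ∀ j, MeasurableSet (B j) := fun j => hmU (n+1) (measurableSet_singleton j)
    have hCm0 : MeasurableSet C := hmε (n+1) (measurableSet_singleton false)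
    -- pointwise decomposition
    have hdecomp : ∀ ω, g ω * Xhat (n+1) ω =
        (∑ j ∈ Finset.Icc 1 n, (A ∩ B j).indicator (fun _ => (1:ℝ)) ω * (g ω * Xhat j ω))
        + (C.indicator (fun _ => (1:ℝ)) ω * g ω) * X (n+1) ω := by
      intro ω
      rw [hrec (n+1) hk2 ω]
      by_cases h : ε (n+1) ω
      · have hCn : ω ∉ C := by simp [hC, h]
        have hU := hUmem (n+1) hk2 ω
        rw [hidx1] at hU
        rw [if_pos h, Set.indicator_of_notMem hCn, zero_mul, zero_mul, add_zero]
        rw [Finset.sum_eq_single_of_mem (U (n+1) ω) hU ?_]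
        · have hmem : ω ∈ A ∩ B (U (n+1) ω) := ⟨h, rfl⟩
          rw [Set.indicator_of_mem hmem, one_mul]
        · intro b _ hb
          have hnm : ω ∉ A ∩ B b := fun hc => hb (hc.2.symm ▸ rfl)
          rw [Set.indicator_of_notMem hnm, zero_mul]
      · have hCy : ω ∈ C := by simp [hC, Bool.not_eq_true] at h ⊢; exact h
        have hsum : ∀ j ∈ Finset.Icc 1 n,
            (A ∩ B j).indicator (fun _ => (1:ℝ)) ω * (g ω * Xhat j ω) = 0 := by
          intro j _
          have hnm : ω ∉ A ∩ B j := fun hc => h hc.1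
          rw [Set.indicator_of_notMem hnm, zero_mul]
        rw [if_neg h, Finset.sum_congr rfl hsum, Finset.sum_const_zero, zero_add,
          Set.indicator_of_mem hCy, one_mul]
    -- integrability of the pieces
    have hintgXhat : ∀ j, 1 ≤ j → Integrable (fun ω => g ω * Xhat j ω) P := fun j hj =>
      (hintXhat j hj).bdd_mul hgm0.aestronglyMeasurable (ae_of_all _ hgbdd)
    have hind_bdd : ∀ (s : Set Ω), ∀ ω, ‖s.indicator (fun _ => (1:ℝ)) ω‖ ≤ 1 := by
      intro s ω
      by_cases h : ω ∈ s
      · rw [Set.indicator_of_mem h]; simp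
      · rw [Set.indicator_of_notMem h]; simp
    have hint1 : ∀ j, 1 ≤ j →
        Integrable (fun ω => (A ∩ B j).indicator (fun _ => (1:ℝ)) ω * (g ω * Xhat j ω)) P :=
      fun j hj => (hintgXhat j hj).bdd_mul
        ((measurable_const.indicator (hAm0.inter (hBm0 j))).aestronglyMeasurable)
        (ae_of_all _ (hind_bdd _))
    have hint2 : Integrable (fun ω => (C.indicator (fun _ => (1:ℝ)) ω * g ω) * X (n+1) ω) P := by
      refine (hintX (n+1)).bdd_mul (c := 1)
        (((measurable_const.indicator hCm0).mul hgm0).aestronglyMeasurable) (ae_of_all _ fun ω => ?_)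
      calc ‖C.indicator (fun _ => (1:ℝ)) ω * g ω‖ = ‖C.indicator (fun _ => (1:ℝ)) ω‖ * ‖g ω‖ :=
            norm_mul _ _
        _ ≤ 1 * 1 := mul_le_mul (hind_bdd _ _) (hgbdd ω) (norm_nonneg _) zero_le_one
        _ = 1 := one_mul 1
    -- the second piece has zero integral
    have hzero : ∫ ω, (C.indicator (fun _ => (1:ℝ)) ω * g ω) * X (n+1) ω ∂P = 0 := by
      have hIF : IndepFun (fun ω => C.indicator (fun _ => (1:ℝ)) ω * g ω) (X (n+1)) P := by
        refine indepFun_of_measurable' (hInd2 n) ?_ (hmXc (n+1))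
        exact Measurable.mul
          (Measurable.indicator measurable_const
            ((le_sup_right : cE (n+1) ≤ G n ⊔ cE (n+1)) _ (hCmeas (n+1))))
          (hgmeas.mono le_sup_left le_rfl)
      rw [hIF.integral_fun_mul_eq_mul_integral (((measurable_const.indicator hCm0).mul hgm0).aestronglyMeasurable)
        (hmX (n+1)).aestronglyMeasurable, hEX (n+1), mul_zero]
    -- each indicator piece factorizes
    have hpiece : ∀ j ∈ Finset.Icc 1 n,
        ∫ ω, (A ∩ B j).indicator (fun _ => (1:ℝ)) ω * (g ω * Xhat j ω) ∂P =
          (p / n) * ∫ ω, g ω * Xhat j ω ∂P := by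
      intro j hj
      rw [Finset.mem_Icc] at hj
      have hIF : IndepFun (fun ω => (A ∩ B j).indicator (fun _ => (1:ℝ)) ω)
          (fun ω => g ω * Xhat j ω) P := by
        refine indepFun_of_measurable' (hInd1 n).symm ?_ (hgmeas.mul (hXhatGn j n hj.1 hj.2))
        exact Measurable.indicator measurable_const
          (MeasurableSet.inter
            ((le_sup_left : cE (n+1) ≤ cE (n+1) ⊔ cU (n+1)) _ (hAmeas (n+1)))
            ((le_sup_right : cU (n+1) ≤ cE (n+1) ⊔ cU (n+1)) _ (hBmeas (n+1) j)))
      rw [hIF.integral_fun_mul_eq_mul_integral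
        ((measurable_const.indicator (hAm0.inter (hBm0 j))).aestronglyMeasurable)
        ((hgm0.mul (hmXhat j)).aestronglyMeasurable)]
      congr 1
      rw [integral_indicator_const (1:ℝ) (hAm0.inter (hBm0 j)), smul_eq_mul, mul_one]
      rw [measureReal_def, hPεU n hn j, hUunif (n+1) hk2 j (by rw [hidx1]; exact Finset.mem_Icc.2 hj), hidx1]
      rw [ENNReal.toReal_mul, ENNReal.toReal_ofReal hp0'.le, ENNReal.toReal_inv,
        ENNReal.toReal_natCast, div_eq_mul_inv]
    -- put everything together
    calc ∫ ω, g ω * Xhat (n+1) ω ∂P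
        = ∫ ω, ((∑ j ∈ Finset.Icc 1 n,
              (A ∩ B j).indicator (fun _ => (1:ℝ)) ω * (g ω * Xhat j ω))
            + (C.indicator (fun _ => (1:ℝ)) ω * g ω) * X (n+1) ω) ∂P :=
          integral_congr_ae (ae_of_all _ hdecomp)
      _ = (∫ ω, (∑ j ∈ Finset.Icc 1 n,
              (A ∩ B j).indicator (fun _ => (1:ℝ)) ω * (g ω * Xhat j ω)) ∂P)
          + ∫ ω, (C.indicator (fun _ => (1:ℝ)) ω * g ω) * X (n+1) ω ∂P := by
          refine integral_add ?_ hint2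
          exact integrable_finset_sum _ fun j hj =>
            hint1 j (Finset.mem_Icc.1 hj).1
      _ = ∑ j ∈ Finset.Icc 1 n,
            ∫ ω, (A ∩ B j).indicator (fun _ => (1:ℝ)) ω * (g ω * Xhat j ω) ∂P := by
          rw [hzero, add_zero]
          exact integral_finset_sum _ fun j hj => hint1 j (Finset.mem_Icc.1 hj).1
      _ = ∑ j ∈ Finset.Icc 1 n, (p / n) * ∫ ω, g ω * Xhat j ω ∂P :=
          Finset.sum_congr rfl hpiece
      _ = (p / n) * ∑ j ∈ Finset.Icc 1 n, ∫ ω, g ω * Xhat j ω ∂P := by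
          rw [Finset.mul_sum]
      _ = (p / n) * ∫ ω, g ω * S n ω ∂P := by
          congr 1
          rw [← integral_finset_sum _ fun j hj => hintgXhat j (Finset.mem_Icc.1 hj).1]
          refine integral_congr_ae (ae_of_all _ fun ω => ?_)
          simp only [hS, Finset.mul_sum]
    -- Gamma function facts
  have haPos : ∀ n : ℕ, 1 ≤ n → 0 < a n := by
    intro n hn
    have hn0 : (0:ℝ) < n := by exact_mod_cast hn
    rw [ha]
    exact div_pos (Real.Gamma_pos_of_pos (by linarith))
      (mul_pos (Real.Gamma_pos_of_pos hn0) (Real.Gamma_pos_of_pos (by linarith)))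
  have haRec : ∀ n : ℕ, 1 ≤ n → a (n+1) = a n * (((n:ℝ) + p) / n) := by
    intro n hn
    have hn0 : (0:ℝ) < n := by exact_mod_cast hn
    have h1 : ((n+1:ℕ):ℝ) + p = ((n:ℝ) + p) + 1 := by push_cast; ring
    have h2 : ((n+1:ℕ):ℝ) = (n:ℝ) + 1 := by push_cast; ring
    have hΓn : 0 < Real.Gamma n := Real.Gamma_pos_of_pos hn0
    have hΓp : 0 < Real.Gamma (p+1) := Real.Gamma_pos_of_pos (by linarith)
    have hΓnp : 0 < Real.Gamma ((n:ℝ)+p) := Real.Gamma_pos_of_pos (by linarith)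
    rw [ha, ha, h1, h2, Real.Gamma_add_one (by positivity : (n:ℝ) + p ≠ 0),
      Real.Gamma_add_one (ne_of_gt hn0)]
    field_simp
  -- the reinforced steps are centered
  have hEXhat : ∀ k, 1 ≤ k → ∫ ω, Xhat k ω ∂P = 0 := by
    intro k
    induction k using Nat.strong_induction_on with
    | _ k ih =>
      intro hk1
      rcases eq_or_lt_of_le hk1 with h1 | h2
      · rw [← h1, hX1]; exact hcent
      · obtain ⟨n, rfl⟩ : ∃ n, k = n + 1 := ⟨k - 1, by omega⟩
        have hn1 : 1 ≤ n := by omega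
        have hkey := key n hn1 (fun _ => 1) measurable_const (fun ω => by simp)
        simp only [one_mul] at hkey
        rw [hkey]
        have hSn : ∫ ω, S n ω ∂P = 0 := by
          have : ∫ ω, S n ω ∂P = ∑ j ∈ Finset.Icc 1 n, ∫ ω, Xhat j ω ∂P := by
            rw [← integral_finset_sum _ fun j hj => hintXhat j (Finset.mem_Icc.1 hj).1]
            exact integral_congr_ae (ae_of_all _ fun ω => hS n ω)
          rw [this]
          refine Finset.sum_eq_zero fun j hj => ?_
          rw [Finset.mem_Icc] at hj
          exact ih j (by omega) hj.1
        rw [hSn, mul_zero]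
  -- Part 2 : mean zero
  have part2 : ∀ n : ℕ, 1 ≤ n → ∫ ω, M n ω ∂P = 0 := by
    intro n hn
    have h1 : ∫ ω, M n ω ∂P = (∫ ω, S n ω ∂P) / a n := by
      rw [← integral_div]
      exact integral_congr_ae (ae_of_all _ fun ω => hM n ω)
    have hSn : ∫ ω, S n ω ∂P = 0 := by
      have : ∫ ω, S n ω ∂P = ∑ j ∈ Finset.Icc 1 n, ∫ ω, Xhat j ω ∂P := by
        rw [← integral_finset_sum _ fun j hj => hintXhat j (Finset.mem_Icc.1 hj).1]
        exact integral_congr_ae (ae_of_all _ fun ω => hS n ω)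
      rw [this]
      exact Finset.sum_eq_zero fun j hj => hEXhat j (Finset.mem_Icc.1 hj).1
    rw [h1, hSn, zero_div]
  -- Part 3 : martingale property
  refine ⟨part1, part2, fun n hn => ?_⟩
  have hn0 : (0:ℝ) < n := by exact_mod_cast hn
  have han : a n ≠ 0 := ne_of_gt (haPos n hn)
  have han1 : a (n+1) ≠ 0 := ne_of_gt (haPos (n+1) (by omega))
  haveI : SigmaFinite (P.trim (hFle n)) := inferInstance
  refine (ae_eq_condExp_of_forall_setIntegral_eq (hFle n) (hintM (n+1))
    (fun s _ _ => (hintM n).integrableOn) (fun s hs _ => ?_) ?_).symm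
  swap
  · exact StronglyMeasurable.aestronglyMeasurable (Measurable.stronglyMeasurable (part1 n hn))
  -- the set integral identity
  have hsm0 : MeasurableSet s := hFle n s hs
  have hsG : MeasurableSet[G n] s := hFleG n s hs
  set g : Ω → ℝ := s.indicator (fun _ => (1:ℝ)) with hg
  have hgmeas : Measurable[G n] g := measurable_const.indicator hsG
  have hgm0 : Measurable g := measurable_const.indicator hsm0
  have hgbdd : ∀ ω, ‖g ω‖ ≤ 1 := by
    intro ω
    by_cases h : ω ∈ s <;> simp [hg, h]
  have hkey := key n hn g hgmeas hgbdd
  -- rewriting set integrals through the indicator g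
  have hind : ∀ f : Ω → ℝ, ∫ ω in s, f ω ∂P = ∫ ω, g ω * f ω ∂P := by
    intro f
    rw [← integral_indicator hsm0]
    refine integral_congr_ae (ae_of_all _ fun ω => ?_)
    by_cases h : ω ∈ s <;> simp [hg, h]
  have hSsucc : ∀ ω, S (n+1) ω = S n ω + Xhat (n+1) ω := by
    intro ω
    rw [hS, hS, ← Finset.sum_Icc_succ_top (by omega : 1 ≤ n + 1)]
  -- compute the set integral of S (n+1)
  have hgS : ∫ ω, g ω * S (n+1) ω ∂P = (1 + p / n) * ∫ ω, g ω * S n ω ∂P := by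
    have hi1 : Integrable (fun ω => g ω * S n ω) P :=
      (hintS n).bdd_mul hgm0.aestronglyMeasurable (ae_of_all _ hgbdd)
    have hi2 : Integrable (fun ω => g ω * Xhat (n+1) ω) P :=
      (hintXhat (n+1) (by omega)).bdd_mul hgm0.aestronglyMeasurable (ae_of_all _ hgbdd)
    calc ∫ ω, g ω * S (n+1) ω ∂P
        = ∫ ω, (g ω * S n ω + g ω * Xhat (n+1) ω) ∂P := by
          refine integral_congr_ae (ae_of_all _ fun ω => ?_)
          simp only [hSsucc, mul_add]
      _ = (∫ ω, g ω * S n ω ∂P) + ∫ ω, g ω * Xhat (n+1) ω ∂P := integral_add hi1 hi2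
      _ = (∫ ω, g ω * S n ω ∂P) + (p / n) * ∫ ω, g ω * S n ω ∂P := by rw [hkey]
      _ = (1 + p / n) * ∫ ω, g ω * S n ω ∂P := by ring
  -- conclude
  have hMn1 : ∫ ω in s, M (n+1) ω ∂P = (∫ ω, g ω * S (n+1) ω ∂P) / a (n+1) := by
    have : ∫ ω in s, M (n+1) ω ∂P = ∫ ω in s, S (n+1) ω / a (n+1) ∂P :=
      integral_congr_ae (ae_of_all _ fun ω => hM (n+1) ω)
    rw [this, integral_div, hind]
  have hMn : ∫ ω in s, M n ω ∂P = (∫ ω, g ω * S n ω ∂P) / a n := by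
    have : ∫ ω in s, M n ω ∂P = ∫ ω in s, S n ω / a n ∂P :=
      integral_congr_ae (ae_of_all _ fun ω => hM n ω)
    rw [this, integral_div, hind]
  rw [hMn, hMn1, hgS, haRec n hn]
  have hnp : (n:ℝ) + p ≠ 0 := by positivity
  have h1p : (1 : ℝ) + p / n = ((n:ℝ) + p) / n := by field_simp
  rw [h1p]
  field_simp
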